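/- Let $M$ be a finite metric space with $k > 2$ such that for every three distinct points $x, y, z \in M$, the ratio of the maximum to the minimum of the three pairwise distances among them is at least $k$. Then $M$ embeds with distortion at most $k/(k-2)$ into a binary $(k/2)$-HST. -/

import Mathlib

/-- Longest common prefix of two binary paths (= least common ancestor of leaves of a
binary tree encoded as lists of booleans). -/
def lcp : List Bool → List Bool → List Bool
  | a :: as, b :: bs => if a = b then a :: lcp as bs else []
  | _, _ => []

lemma lcp_cons_same (a : Bool) (as bs : List Bool) :
    lcp (a :: as) (a :: bs) = a :: lcp as bs := by simp [lcp]

lemma lcp_cons_diff (a b : Bool) (as bs : List Bool) (h : a ≠ b) :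
    lcp (a :: as) (b :: bs) = [] := by simp [lcp, h]

/-- A packaged HST embedding of the finite subset `s`. -/
structure Pack {M : Type*} [MetricSpace M] (k : ℝ) (s : Finset M) where
  T : Finset (List Bool)
  Δ : List Bool → ℝ
  f : M → List Bool
  root : [] ∈ T
  pc : ∀ v ∈ T, ∀ u : List Bool, u <+: v → u ∈ T
  nonneg : ∀ v ∈ T, 0 ≤ Δ v
  leafIff : ∀ v ∈ T, (Δ v = 0 ↔ ∀ i : Bool, v ++ [i] ∉ T)
  ratio : ∀ v ∈ T, ∀ i : Bool, v ++ [i] ∈ T → Δ (v ++ [i]) ≤ Δ v / (k / 2)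
  inj : Set.InjOn f s
  mem_leaf : ∀ x ∈ s, f x ∈ T ∧ ∀ i : Bool, f x ++ [i] ∉ T
  surj : ∀ v ∈ T, (∀ i : Bool, v ++ [i] ∉ T) → ∃ x ∈ s, f x = v
  le_root : ∀ a ∈ s, ∀ b ∈ s, dist a b ≤ Δ []
  root_eq : ∃ a ∈ s, ∃ b ∈ s, Δ [] = dist a b
  bounds : ∀ x ∈ s, ∀ y ∈ s, x ≠ y →
    dist x y ≤ Δ (lcp (f x) (f y)) ∧ Δ (lcp (f x) (f y)) ≤ (k / (k - 2)) * dist x y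

lemma key {M : Type*} [MetricSpace M] (k : ℝ) (hk : 2 < k)
    (htri : ∀ x y z : M, x ≠ y → x ≠ z → y ≠ z →
      k * min (min (dist x y) (dist x z)) (dist y z) ≤
        max (max (dist x y) (dist x z)) (dist y z)) :
    ∀ s : Finset M, s.Nonempty → Nonempty (Pack k s) := by
  classical
  have hk0 : (0:ℝ) < k := by linarith
  intro s
  induction s using Finset.strongInduction with
  | _ s ih =>
  intro hs
  obtain ⟨x0, hx0⟩ := hs
  by_cases hsing : ∀ y ∈ s, y = x0
  · -- singleton case
    refine ⟨⟨{[]}, fun _ => 0, fun _ => [], by simp, ?_, by simp, ?_, by simp, ?_, ?_, ?_, ?_, ?_, ?_⟩⟩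
    · intro v hv u hu
      simp only [Finset.mem_singleton] at hv
      subst hv
      simp [List.prefix_nil.mp hu]
    · intro v hv
      simp only [Finset.mem_singleton] at hv
      subst hv
      simp
    · intro a ha b hb h
      rw [hsing a ha, hsing b hb]
    · intro x hx
      simp
    · intro v hv _
      simp only [Finset.mem_singleton] at hv
      exact ⟨x0, hx0, hv.symm⟩
    · intro a ha b hb
      rw [hsing a ha, hsing b hb]
      simp
    · exact ⟨x0, hx0, x0, hx0, by simp⟩
    · intro x hx y hy hxy
      exact absurd ((hsing x hx).trans (hsing y hy).symm) hxy
  · -- at least two points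
    push_neg at hsing
    obtain ⟨y0, hy0, hy0x⟩ := hsing
    have hne : (s ×ˢ s).Nonempty := ⟨(x0, x0), Finset.mem_product.mpr ⟨hx0, hx0⟩⟩
    set D : ℝ := (s ×ˢ s).sup' hne (fun p => dist p.1 p.2) with hD
    have hDle : ∀ a ∈ s, ∀ b ∈ s, dist a b ≤ D := by
      intro a ha b hb
      have hmem : ((a, b) : M × M) ∈ s ×ˢ s := Finset.mem_product.mpr ⟨ha, hb⟩
      exact Finset.le_sup' (fun p : M × M => dist p.1 p.2) hmem
    obtain ⟨p, hp, hpD⟩ := Finset.exists_mem_eq_sup' hne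
      (fun p : M × M => dist p.1 p.2)
    obtain ⟨ha, hb⟩ := Finset.mem_product.mp hp
    set a := p.1
    set b := p.2
    have hDab : D = dist a b := hpD
    have hDpos : 0 < D := lt_of_lt_of_le (dist_pos.mpr hy0x) (hDle y0 hy0 x0 hx0)
    have hDk : D / k < D := div_lt_self hDpos (by linarith)
    have hDk0 : 0 < D / k := div_pos hDpos hk0
    have hab : a ≠ b := by
      intro h
      rw [hDab, h, dist_self] at hDpos
      exact lt_irrefl _ hDpos
    -- the two clusters
    set A : Finset M := s.filter (fun z => dist z a ≤ D / k) with hA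
    set B : Finset M := s.filter (fun z => ¬ dist z a ≤ D / k) with hB
    have haA : a ∈ A := by
      simp [hA, ha, hDk0.le]
    have hbB : b ∈ B := by
      simp only [hB, Finset.mem_filter]
      refine ⟨hb, ?_⟩
      rw [dist_comm, ← hDab]
      linarith
    have hBy : ∀ z ∈ s, ¬ dist z a ≤ D / k → dist z b ≤ D / k := by
      intro z hz hza
      push_neg at hza
      by_cases hzb : z = b
      · subst hzb; simp [hDk0.le]
      have hza' : z ≠ a := by
        intro h; subst h; simp at hza; linarith
      have h3 := htri a b z hab (Ne.symm hza') (Ne.symm hzb)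
      have hmax : max (max (dist a b) (dist a z)) (dist b z) ≤ D :=
        max_le (max_le (hDle a ha b hb) (hDle a ha z hz)) (hDle b hb z hz)
      have hmin : min (min (dist a b) (dist a z)) (dist b z) ≤ D / k := by
        rw [le_div_iff₀ hk0]
        nlinarith
      have h1 : D / k < dist a b := by rw [← hDab]; exact hDk
      have h2 : D / k < dist a z := by rw [dist_comm]; exact hza
      rcases le_or_gt (dist b z) (D / k) with h | h
      · rw [dist_comm]; exact h
      · have := lt_min (lt_min h1 h2) h
        linarith
    have hAmem : ∀ z ∈ A, z ∈ s ∧ dist z a ≤ D / k := by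
      intro z hz; exact Finset.mem_filter.mp hz
    have hBmem : ∀ z ∈ B, z ∈ s ∧ dist z b ≤ D / k := by
      intro z hz
      obtain ⟨hz1, hz2⟩ := Finset.mem_filter.mp hz
      exact ⟨hz1, hBy z hz1 hz2⟩
    have hAdiam : ∀ z ∈ A, ∀ w ∈ A, dist z w ≤ 2 * (D / k) := by
      intro z hz w hw
      obtain ⟨_, hz2⟩ := hAmem z hz
      obtain ⟨_, hw2⟩ := hAmem w hw
      have := dist_triangle z a w
      rw [dist_comm a w] at this
      linarith
    have hBdiam : ∀ z ∈ B, ∀ w ∈ B, dist z w ≤ 2 * (D / k) := by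
      intro z hz w hw
      obtain ⟨_, hz2⟩ := hBmem z hz
      obtain ⟨_, hw2⟩ := hBmem w hw
      have := dist_triangle z b w
      rw [dist_comm b w] at this
      linarith
    have hAB : ∀ z ∈ A, ∀ w ∈ B, D * (k - 2) / k ≤ dist z w := by
      intro z hz w hw
      obtain ⟨_, hz2⟩ := hAmem z hz
      obtain ⟨_, hw2⟩ := hBmem w hw
      have h1 : dist a b ≤ dist a z + dist z w + dist w b := dist_triangle4 a z w b
      rw [dist_comm a z] at h1
      rw [← hDab] at h1
      have : D * (k - 2) / k = D - 2 * (D / k) := by field_simp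
      rw [this]
      linarith
    -- clusters are proper nonempty subsets
    have hAsub : A ⊂ s := by
      refine Finset.ssubset_iff_of_subset (Finset.filter_subset _ _) |>.mpr ⟨b, hb, ?_⟩
      intro hbA
      obtain ⟨_, h2⟩ := hAmem b hbA
      rw [dist_comm, ← hDab] at h2
      linarith
    have hBsub : B ⊂ s := by
      refine Finset.ssubset_iff_of_subset (Finset.filter_subset _ _) |>.mpr ⟨a, ha, ?_⟩
      intro haB
      obtain ⟨h1, h2⟩ := Finset.mem_filter.mp haB
      simp at h2
      linarith
    obtain ⟨PA⟩ := ih A hAsub ⟨a, haA⟩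
    obtain ⟨PB⟩ := ih B hBsub ⟨b, hbB⟩
    -- assemble
    set T : Finset (List Bool) :=
      insert [] ((PA.T.image (List.cons false)) ∪ (PB.T.image (List.cons true))) with hT
    have hmemF : ∀ u : List Bool, (false :: u) ∈ T ↔ u ∈ PA.T := by
      intro u
      simp [hT]
    have hmemT : ∀ u : List Bool, (true :: u) ∈ T ↔ u ∈ PB.T := by
      intro u
      simp [hT]
    set Δ : List Bool → ℝ := fun v =>
      match v with
      | [] => D
      | false :: w => PA.Δ w
      | true :: w => PB.Δ w
      with hΔ
    set f : M → List Bool := fun z =>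
      if dist z a ≤ D / k then false :: PA.f z else true :: PB.f z with hf
    have hchA : PA.Δ [] ≤ 2 * (D / k) := by
      obtain ⟨u, hu, v, hv, huv⟩ := PA.root_eq
      rw [huv]; exact hAdiam u hu v hv
    have hchB : PB.Δ [] ≤ 2 * (D / k) := by
      obtain ⟨u, hu, v, hv, huv⟩ := PB.root_eq
      rw [huv]; exact hBdiam u hu v hv
    refine ⟨⟨T, Δ, f, ?_, ?_, ?_, ?_, ?_, ?_, ?_, ?_, ?_, ?_, ?_⟩⟩
    · simp [hT]
    · -- prefix-closed
      intro v hv u hu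
      match v with
      | [] =>
        rw [List.prefix_nil.mp hu]; simp [hT]
      | false :: w =>
        match u with
        | [] => simp [hT]
        | c :: u' =>
          obtain ⟨rfl, hu'⟩ := List.cons_prefix_cons.mp hu
          exact (hmemF u').mpr (PA.pc w ((hmemF w).mp hv) u' hu')
      | true :: w =>
        match u with
        | [] => simp [hT]
        | c :: u' =>
          obtain ⟨rfl, hu'⟩ := List.cons_prefix_cons.mp hu
          exact (hmemT u').mpr (PB.pc w ((hmemT w).mp hv) u' hu')
    · -- nonneg
      intro v hv
      match v with
      | [] => exact hDpos.le
      | false :: w => exact PA.nonneg w ((hmemF w).mp hv)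
      | true :: w => exact PB.nonneg w ((hmemT w).mp hv)
    · -- leaf iff
      intro v hv
      match v with
      | [] =>
        constructor
        · intro h; exact absurd h (ne_of_gt hDpos)
        · intro h
          exact absurd ((hmemF []).mpr PA.root) (h false)
      | false :: w =>
        have hw := (hmemF w).mp hv
        have := PA.leafIff w hw
        constructor
        · intro h i hi
          rw [List.cons_append] at hi
          exact (this.mp h) i ((hmemF _).mp hi)
        · intro h
          refine this.mpr fun i hi => ?_
          exact h i (by rw [List.cons_append]; exact (hmemF _).mpr hi)
      | true :: w =>
        have hw := (hmemT w).mp hv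
        have := PB.leafIff w hw
        constructor
        · intro h i hi
          rw [List.cons_append] at hi
          exact (this.mp h) i ((hmemT _).mp hi)
        · intro h
          refine this.mpr fun i hi => ?_
          exact h i (by rw [List.cons_append]; exact (hmemT _).mpr hi)
    · -- ratio
      intro v hv i hi
      match v with
      | [] =>
        have h2Dk : 2 * (D / k) = D / (k / 2) := by
          field_simp
        cases i with
        | false =>
          show PA.Δ [] ≤ D / (k / 2)
          rw [← h2Dk]; exact hchA
        | true =>
          show PB.Δ [] ≤ D / (k / 2)
          rw [← h2Dk]; exact hchB
      | false :: w =>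
        rw [List.cons_append] at hi ⊢
        exact PA.ratio w ((hmemF w).mp hv) i ((hmemF _).mp hi)
      | true :: w =>
        rw [List.cons_append] at hi ⊢
        exact PB.ratio w ((hmemT w).mp hv) i ((hmemT _).mp hi)
    · -- injective
      intro z hz w hw hfzw
      simp only [hf] at hfzw
      by_cases hzc : dist z a ≤ D / k <;> by_cases hwc : dist w a ≤ D / k <;>
        simp [hzc, hwc] at hfzw
      · exact PA.inj (Finset.mem_coe.mpr (Finset.mem_filter.mpr ⟨hz, hzc⟩)) (Finset.mem_coe.mpr (Finset.mem_filter.mpr ⟨hw, hwc⟩)) hfzw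
      · exact PB.inj (Finset.mem_coe.mpr (Finset.mem_filter.mpr ⟨hz, hzc⟩)) (Finset.mem_coe.mpr (Finset.mem_filter.mpr ⟨hw, hwc⟩)) hfzw
    · -- leaves
      intro z hz
      by_cases hzc : dist z a ≤ D / k
      · have hzA : z ∈ A := Finset.mem_filter.mpr ⟨hz, hzc⟩
        have hfz : f z = false :: PA.f z := by simp [hf, hzc]
        rw [hfz]
        refine ⟨(hmemF _).mpr (PA.mem_leaf z hzA).1, fun i hi => ?_⟩
        rw [List.cons_append] at hi
        exact (PA.mem_leaf z hzA).2 i ((hmemF _).mp hi)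
      · have hzB : z ∈ B := Finset.mem_filter.mpr ⟨hz, hzc⟩
        have hfz : f z = true :: PB.f z := by simp [hf, hzc]
        rw [hfz]
        refine ⟨(hmemT _).mpr (PB.mem_leaf z hzB).1, fun i hi => ?_⟩
        rw [List.cons_append] at hi
        exact (PB.mem_leaf z hzB).2 i ((hmemT _).mp hi)
    · -- surjectivity onto leaves
      intro v hv hleaf
      match v with
      | [] =>
        exact absurd ((hmemF []).mpr PA.root) (hleaf false)
      | false :: w =>
        have hw := (hmemF w).mp hv
        have hwleaf : ∀ i : Bool, w ++ [i] ∉ PA.T := by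
          intro i hi
          exact hleaf i (by rw [List.cons_append]; exact (hmemF _).mpr hi)
        obtain ⟨z, hzA, hz⟩ := PA.surj w hw hwleaf
        obtain ⟨hzs, hzc⟩ := hAmem z hzA
        exact ⟨z, hzs, by simp [hf, hzc, hz]⟩
      | true :: w =>
        have hw := (hmemT w).mp hv
        have hwleaf : ∀ i : Bool, w ++ [i] ∉ PB.T := by
          intro i hi
          exact hleaf i (by rw [List.cons_append]; exact (hmemT _).mpr hi)
        obtain ⟨z, hzB, hz⟩ := PB.surj w hw hwleaf
        have hzs := (Finset.mem_filter.mp hzB).1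
        have hzc := (Finset.mem_filter.mp hzB).2
        exact ⟨z, hzs, by simp [hf, hzc, hz]⟩
    · -- le_root
      intro u hu v hv
      exact hDle u hu v hv
    · -- root_eq
      exact ⟨a, ha, b, hb, hDab⟩
    · -- distortion bounds
      intro z hz w hw hzw
      by_cases hzc : dist z a ≤ D / k <;> by_cases hwc : dist w a ≤ D / k
      · have hfz : f z = false :: PA.f z := by simp [hf, hzc]
        have hfw : f w = false :: PA.f w := by simp [hf, hwc]
        rw [hfz, hfw, lcp_cons_same]
        exact PA.bounds z (Finset.mem_filter.mpr ⟨hz, hzc⟩) w (Finset.mem_filter.mpr ⟨hw, hwc⟩) hzw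
      · have hfz : f z = false :: PA.f z := by simp [hf, hzc]
        have hfw : f w = true :: PB.f w := by simp [hf, hwc]
        rw [hfz, hfw, lcp_cons_diff _ _ _ _ (by simp)]
        have h1 : dist z w ≤ D := hDle z hz w hw
        have h2 : D * (k - 2) / k ≤ dist z w :=
          hAB z (Finset.mem_filter.mpr ⟨hz, hzc⟩) w (Finset.mem_filter.mpr ⟨hw, hwc⟩)
        have hk2 : (0:ℝ) < k - 2 := by linarith
        constructor
        · exact h1
        · show D ≤ k / (k - 2) * dist z w
          rw [div_mul_eq_mul_div, le_div_iff₀ hk2]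
          rw [div_le_iff₀ hk0] at h2
          nlinarith
      · have hfz : f z = true :: PB.f z := by simp [hf, hzc]
        have hfw : f w = false :: PA.f w := by simp [hf, hwc]
        rw [hfz, hfw, lcp_cons_diff _ _ _ _ (by simp)]
        have h1 : dist z w ≤ D := hDle z hz w hw
        have h2 : D * (k - 2) / k ≤ dist w z :=
          hAB w (Finset.mem_filter.mpr ⟨hw, hwc⟩) z (Finset.mem_filter.mpr ⟨hz, hzc⟩)
        rw [dist_comm w z] at h2
        have hk2 : (0:ℝ) < k - 2 := by linarith
        constructor
        · exact h1
        · show D ≤ k / (k - 2) * dist z w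
          rw [div_mul_eq_mul_div, le_div_iff₀ hk2]
          rw [div_le_iff₀ hk0] at h2
          nlinarith
      · have hfz : f z = true :: PB.f z := by simp [hf, hzc]
        have hfw : f w = true :: PB.f w := by simp [hf, hwc]
        rw [hfz, hfw, lcp_cons_same]
        exact PB.bounds z (Finset.mem_filter.mpr ⟨hz, hzc⟩) w (Finset.mem_filter.mpr ⟨hw, hwc⟩) hzw

/-- a finite metric space `M` (`k > 2`) in which every three distinct
points have max-to-min distance ratio at least `k` embeds with distortion at most
`k/(k-2)` into a binary `(k/2)`-HST: a prefix-closed finite set `T` of binary paths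
with labels `Δ` satisfying the `(k/2)`-HST conditions, together with a bijection `f`
of `M` onto the leaves of `T` such that for some scale `r > 0`,
`r·d(x,y) ≤ Δ(lca(f x, f y)) ≤ (k/(k-2))·r·d(x,y)`. -/
theorem stmt_11 {M : Type*} [MetricSpace M] [Fintype M] [Nonempty M]
    (k : ℝ) (hk : 2 < k)
    (htri : ∀ x y z : M, x ≠ y → x ≠ z → y ≠ z →
      k * min (min (dist x y) (dist x z)) (dist y z) ≤
        max (max (dist x y) (dist x z)) (dist y z)) :
    ∃ (T : Finset (List Bool)) (Δ : List Bool → ℝ),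
      [] ∈ T ∧
      (∀ v ∈ T, ∀ u : List Bool, u <+: v → u ∈ T) ∧
      (∀ v ∈ T, 0 ≤ Δ v) ∧
      (∀ v ∈ T, (Δ v = 0 ↔ ∀ i : Bool, v ++ [i] ∉ T)) ∧
      (∀ v ∈ T, ∀ i : Bool, v ++ [i] ∈ T → Δ (v ++ [i]) ≤ Δ v / (k / 2)) ∧
      ∃ f : M → List Bool, Function.Injective f ∧
        (∀ x : M, f x ∈ T ∧ ∀ i : Bool, f x ++ [i] ∉ T) ∧
        (∀ v ∈ T, (∀ i : Bool, v ++ [i] ∉ T) → ∃ x : M, f x = v) ∧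
        ∃ r : ℝ, 0 < r ∧ ∀ x y : M, x ≠ y →
          r * dist x y ≤ Δ (lcp (f x) (f y)) ∧
          Δ (lcp (f x) (f y)) ≤ (k / (k - 2)) * (r * dist x y) := by
  obtain ⟨P⟩ := key k hk htri Finset.univ Finset.univ_nonempty
  refine ⟨P.T, P.Δ, P.root, P.pc, P.nonneg, P.leafIff, P.ratio, P.f, ?_, ?_, ?_, 1, one_pos, ?_⟩
  · intro u v h
    exact P.inj (by simp) (by simp) h
  · intro x
    exact P.mem_leaf x (Finset.mem_univ x)
  · intro v hv hleaf
    obtain ⟨z, _, hz⟩ := P.surj v hv hleaf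
    exact ⟨z, hz⟩
  · intro x y hxy
    have := P.bounds x (Finset.mem_univ x) y (Finset.mem_univ y) hxy
    rw [one_mul]
    exact this
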